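/- arXiv:2601.20873 — 2 statements merged into one kernel-verified Lean document; each statement's English description precedes it below -/
import Mathlib

section
/- For real α > -1, y > 0, ω ∈ ℝ, and natural numbers m, n with m > n: Ŝ_n^m(y) = Ī_{m,0}^{(α)}(y) · (L_n^{(α+1)}(-1/y) - ω y L_n^{(α)}(-1/y)), where Ŝ_n^m = Ī_{m,n}^{(α,α+1)} - ω y Ī_{m,n}^{(α,α)}. -/
open MeasureTheory Real Set

/-- Generalized Laguerre polynomial `L_n^{(α)}(x)`. -/
noncomputable def genLaguerre (α : ℝ) (n : ℕ) (x : ℝ) : ℝ :=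
  ∑ j ∈ Finset.range (n + 1),
    (-1 : ℝ) ^ j * (Real.Gamma (α + n + 1) /
      (Real.Gamma (α + j + 1) * (Nat.factorial (n - j)))) * x ^ j / (Nat.factorial j)

/-- The function `I_{m,n}^{(α,β)}(y)`. -/
noncomputable def Imn (α β y : ℝ) (m n : ℕ) : ℝ :=
  ∫ ρ in Ioi (0 : ℝ), (1 + y * ρ)⁻¹ * ρ ^ α * Real.exp (-ρ) *
    genLaguerre α m ρ * genLaguerre β n ρ


/-- The normalized function Ī_(m,n)^(α,β)(y). -/
noncomputable def Ibar (α β y : ℝ) (m n : ℕ) : ℝ :=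
  ((Nat.factorial m : ℝ) / Real.Gamma (m + α + 1)) * Imn α β y m n

/-- The function Ŝ_n^m(y) = Ī_(m,n)^(α,α+1)(y) - ω y Ī_(m,n)^(α,α)(y). -/
noncomputable def Shat (α y ω : ℝ) (m n : ℕ) : ℝ :=
  Ibar α (α + 1) y m n - ω * y * Ibar α α y m n

namespace ShatAux

open Polynomial

noncomputable def lagPoly (α : ℝ) (n : ℕ) : Polynomial ℝ :=
  ∑ j ∈ Finset.range (n + 1),
    Polynomial.C ((-1 : ℝ) ^ j * (Real.Gamma (α + n + 1) /
      (Real.Gamma (α + j + 1) * (Nat.factorial (n - j)))) / (Nat.factorial j)) * Polynomial.X ^ j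

lemma lagPoly_eval (α : ℝ) (n : ℕ) (x : ℝ) : (lagPoly α n).eval x = genLaguerre α n x := by
  simp only [lagPoly, genLaguerre, eval_finset_sum, eval_mul, eval_C, eval_pow, eval_X]
  exact Finset.sum_congr rfl fun j _ => by ring

lemma lagPoly_natDegree_le (α : ℝ) (n : ℕ) : (lagPoly α n).natDegree ≤ n := by
  apply Polynomial.natDegree_sum_le_of_forall_le
  intro j hj
  refine le_trans (natDegree_C_mul_le _ _) ?_
  simpa using Nat.lt_succ_iff.mp (Finset.mem_range.mp hj)

lemma genLaguerre_zero (α : ℝ) (hα : -1 < α) (x : ℝ) : genLaguerre α 0 x = 1 := by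
  have h : Real.Gamma (α + 1) ≠ 0 := (Real.Gamma_pos_of_pos (by linarith)).ne'
  simp [genLaguerre]
  field_simp
  exact h

lemma genLaguerre_rec (α : ℝ) (hα : -1 < α) (n : ℕ) (z : ℝ) :
    genLaguerre (α + 1) (n + 1) z = genLaguerre (α + 1) n z + genLaguerre α (n + 1) z := by
  have hpos : ∀ j : ℕ, (0:ℝ) < α + j + 1 := fun j => by
    have := (Nat.cast_nonneg j : (0:ℝ) ≤ j); linarith
  have hΓ : ∀ j : ℕ, Real.Gamma (α + j + 1) ≠ 0 := fun j =>
    (Real.Gamma_pos_of_pos (hpos j)).ne'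
  simp only [genLaguerre]
  rw [Finset.sum_range_succ (n := n + 1), Finset.sum_range_succ (n := n + 1),
    ← add_assoc, ← Finset.sum_add_distrib]
  congr 1
  · refine Finset.sum_congr rfl fun j hj => ?_
    have hjn : j ≤ n := Nat.lt_succ_iff.mp (Finset.mem_range.mp hj)
    have e1 : Real.Gamma (α + 1 + (n + 1 : ℕ) + 1) =
        (α + n + 2) * Real.Gamma (α + (n + 1 : ℕ) + 1) := by
      have h : α + 1 + (n + 1 : ℕ) + 1 = (α + (n + 1 : ℕ) + 1) + 1 := by push_cast; ring
      rw [h, Real.Gamma_add_one (hpos (n+1)).ne']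
      push_cast; ring
    have e2 : Real.Gamma (α + 1 + j + 1) = (α + j + 1) * Real.Gamma (α + j + 1) := by
      have h : α + 1 + (j : ℝ) + 1 = (α + j + 1) + 1 := by ring
      rw [h, Real.Gamma_add_one (hpos j).ne']
    have e3 : Real.Gamma (α + 1 + n + 1) = (α + n + 1) * Real.Gamma (α + n + 1) := by
      have h : α + 1 + (n : ℝ) + 1 = (α + n + 1) + 1 := by ring
      rw [h, Real.Gamma_add_one (hpos n).ne']
    have e4 : Real.Gamma (α + (n + 1 : ℕ) + 1) = (α + n + 1) * Real.Gamma (α + n + 1) := by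
      have h : α + ((n : ℝ) + 1) + 1 = (α + n + 1) + 1 := by ring
      push_cast
      rw [h, Real.Gamma_add_one (hpos n).ne']
    have e5 : (Nat.factorial (n + 1 - j) : ℝ) = (n + 1 - j : ℕ) * Nat.factorial (n - j) := by
      have h : n + 1 - j = (n - j) + 1 := by omega
      rw [h, Nat.factorial_succ]
      push_cast; ring
    have e6 : ((n + 1 - j : ℕ) : ℝ) = (n : ℝ) + 1 - j := by
      have : ((n + 1 - j : ℕ) : ℝ) = ((n + 1 : ℕ) : ℝ) - (j : ℕ) := by
        rw [Nat.cast_sub (by omega)]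
      rw [this]; push_cast; ring
    rw [e1, e2, e3, e4, e5, e6]
    have hf1 : (Nat.factorial (n - j) : ℝ) ≠ 0 := by positivity
    have hf2 : (Nat.factorial j : ℝ) ≠ 0 := by positivity
    have h1 : (α + (j : ℝ) + 1) ≠ 0 := (hpos j).ne'
    have h2 : Real.Gamma (α + j + 1) ≠ 0 := hΓ j
    have h3 : (n : ℝ) + 1 - j ≠ 0 := by
      have : (j : ℝ) ≤ n := by exact_mod_cast hjn
      linarith
    field_simp
    ring
  · -- top terms  j = n+1
    have h : n + 1 - (n + 1) = 0 := by omega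
    rw [h]
    have e2 : Real.Gamma (α + 1 + (n + 1 : ℕ) + 1) = Real.Gamma (α + 1 + (n + 1 : ℕ) + 1) := rfl
    have hΓ1 : Real.Gamma (α + 1 + (n + 1 : ℕ) + 1) ≠ 0 := by
      refine (Real.Gamma_pos_of_pos ?_).ne'
      have := hpos (n+1); linarith
    have hΓ2 : Real.Gamma (α + (n + 1 : ℕ) + 1) ≠ 0 := hΓ _
    simp only [Nat.factorial_zero, Nat.cast_one]
    push_cast at hΓ1 hΓ2 ⊢
    field_simp

lemma sum_genLaguerre (α : ℝ) (hα : -1 < α) (n : ℕ) (z : ℝ) :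
    ∑ k ∈ Finset.range (n + 1), genLaguerre α k z = genLaguerre (α + 1) n z := by
  induction n with
  | zero => simp [genLaguerre_zero α hα, genLaguerre_zero (α + 1) (by linarith)]
  | succ n ih =>
      rw [Finset.sum_range_succ, ih, genLaguerre_rec α hα n z]


lemma alt_sum_zero : ∀ (m : ℕ) (P : Polynomial ℝ), P.degree < m →
    ∑ i ∈ Finset.range (m + 1), (-1 : ℝ) ^ i * (m.choose i) * P.eval (i : ℝ) = 0 := by
  intro m
  induction m with
  | zero =>
      intro P hP
      have : P = 0 := by
        rw [← Polynomial.degree_eq_bot]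
        exact Nat.WithBot.lt_zero_iff.mp (by exact_mod_cast hP)
      simp [this]
  | succ m ih =>
      intro P hP
      set Q : Polynomial ℝ := P - P.comp (X + C 1) with hQdef
      have hQeval : ∀ i : ℕ, Q.eval (i : ℝ) = P.eval (i : ℝ) - P.eval ((i + 1 : ℕ) : ℝ) := by
        intro i
        simp [hQdef, eval_comp]
      have hQdeg : Q.degree < m := by
        rcases eq_or_ne P.natDegree 0 with h0 | h0
        · obtain ⟨c, rfl⟩ := Polynomial.natDegree_eq_zero.mp h0
          simp [hQdef]
        · have hPne : P ≠ 0 := fun h => h0 (by simp [h])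
          have hcompne : P.comp (X + C 1) ≠ 0 := fun h => by
            have h2 := Polynomial.natDegree_comp (p := P) (q := X + C (1:ℝ))
            rw [h, Polynomial.natDegree_zero, Polynomial.natDegree_X_add_C, mul_one] at h2
            exact h0 h2.symm
          have hdeq : (P.comp (X + C 1)).degree = P.degree := by
            rw [Polynomial.degree_eq_natDegree hcompne, Polynomial.degree_eq_natDegree hPne,
              Polynomial.natDegree_comp, Polynomial.natDegree_X_add_C, mul_one]
          have hlc : P.leadingCoeff = (P.comp (X + C 1)).leadingCoeff := by
            rw [Polynomial.leadingCoeff_comp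
                (by rw [Polynomial.natDegree_X_add_C]; exact one_ne_zero),
              (Polynomial.monic_X_add_C (1:ℝ)).leadingCoeff, one_pow, mul_one]
          have hlt : Q.degree < P.degree :=
            Polynomial.degree_sub_lt hdeq.symm hPne hlc
          have hle : P.degree ≤ m := by
            rw [Polynomial.degree_eq_natDegree hPne] at hP ⊢
            exact_mod_cast Nat.lt_succ_iff.mp (by exact_mod_cast hP)
          exact lt_of_lt_of_le hlt hle
      have key : ∑ i ∈ Finset.range (m + 2), (-1 : ℝ) ^ i * ((m+1).choose i) * P.eval (i : ℝ)
          = ∑ i ∈ Finset.range (m + 1), (-1 : ℝ) ^ i * (m.choose i) * Q.eval (i : ℝ) := by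
        have expand : ∀ i : ℕ, (-1 : ℝ) ^ i * (m.choose i) * Q.eval (i : ℝ)
            = (-1 : ℝ) ^ i * (m.choose i) * P.eval (i : ℝ)
              - (-1 : ℝ) ^ i * (m.choose i) * P.eval ((i + 1 : ℕ) : ℝ) := by
          intro i; rw [hQeval]; ring
        simp only [expand]
        rw [Finset.sum_sub_distrib]
        rw [Finset.sum_range_succ' (fun i => (-1 : ℝ) ^ i * ((m+1).choose i) * P.eval (i : ℝ)) (m+1)]
        rw [Finset.sum_range_succ' (fun i => (-1 : ℝ) ^ i * (m.choose i) * P.eval (i : ℝ)) m]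
        have e1 : ∀ k ∈ Finset.range (m+1), (-1:ℝ)^(k+1) * (((m+1).choose (k+1) : ℕ) : ℝ) * P.eval ((k+1:ℕ):ℝ)
            = (-1:ℝ)^(k+1) * ((m.choose k : ℕ) : ℝ) * P.eval ((k+1:ℕ):ℝ)
              + (-1:ℝ)^(k+1) * ((m.choose (k+1) : ℕ) : ℝ) * P.eval ((k+1:ℕ):ℝ) := by
          intro k _
          rw [Nat.choose_succ_succ]
          push_cast
          ring
        rw [Finset.sum_congr rfl e1, Finset.sum_add_distrib,
          Finset.sum_range_succ (fun k => (-1:ℝ)^(k+1) * ((m.choose (k+1) : ℕ):ℝ) * P.eval ((k+1:ℕ):ℝ))]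
        simp only [Nat.choose_succ_self, Nat.cast_zero, mul_zero, zero_mul, add_zero,
          Nat.choose_zero_right, Nat.cast_one, Nat.cast_zero]
        push_cast
        have e2 : ∑ k ∈ Finset.range (m+1), (-1:ℝ)^(k+1) * ((m.choose k : ℕ):ℝ) * P.eval ((k:ℝ)+1)
            = -∑ k ∈ Finset.range (m+1), (-1:ℝ)^k * ((m.choose k : ℕ):ℝ) * P.eval ((k:ℝ)+1) := by
          rw [← Finset.sum_neg_distrib]
          exact Finset.sum_congr rfl fun k _ => by ring
        rw [e2]
        ring
      rw [key]
      exact ih Q hQdeg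


noncomputable def risingPoly (α : ℝ) (j : ℕ) : Polynomial ℝ :=
  ∏ t ∈ Finset.range j, (X + C (α + 1 + t))

lemma risingPoly_monic (α : ℝ) (j : ℕ) : (risingPoly α j).Monic :=
  monic_prod_of_monic _ _ fun _ _ => monic_X_add_C _

lemma risingPoly_natDegree (α : ℝ) (j : ℕ) : (risingPoly α j).natDegree = j := by
  rw [risingPoly, Polynomial.natDegree_prod _ _ fun t _ => (monic_X_add_C _).ne_zero]
  simp only [Polynomial.natDegree_X_add_C, Finset.sum_const, Finset.card_range, smul_eq_mul,
    mul_one]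

lemma gamma_rising (α : ℝ) (hα : -1 < α) (i j : ℕ) :
    Real.Gamma (α + j + i + 1) = Real.Gamma (α + i + 1) * (risingPoly α j).eval (i : ℝ) := by
  induction j with
  | zero => simp [risingPoly]
  | succ j ih =>
      have h1 : α + (j + 1 : ℕ) + i + 1 = (α + j + i + 1) + 1 := by push_cast; ring
      have h2 : (0 : ℝ) < α + j + i + 1 := by
        have := (Nat.cast_nonneg j : (0:ℝ) ≤ j); have := (Nat.cast_nonneg i : (0:ℝ) ≤ i)
        linarith
      have hsucc : risingPoly α (j + 1) = risingPoly α j * (X + C (α + 1 + j)) :=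
        Finset.prod_range_succ _ _
      rw [h1, Real.Gamma_add_one h2.ne', ih, hsucc]
      simp only [eval_mul, eval_add, eval_X, eval_C]
      ring

/-- The core orthogonality sum. -/
lemma orth_sum (α : ℝ) (hα : -1 < α) (m j : ℕ) (hj : j < m) :
    ∑ i ∈ Finset.range (m + 1),
      ((-1 : ℝ) ^ i * (Real.Gamma (α + m + 1) /
          (Real.Gamma (α + i + 1) * (Nat.factorial (m - i)))) / (Nat.factorial i)) *
        Real.Gamma (α + j + i + 1) = 0 := by
  have hpos : ∀ i : ℕ, (0:ℝ) < α + i + 1 := fun i => by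
    have := (Nat.cast_nonneg i : (0:ℝ) ≤ i); linarith
  have key : ∀ i ∈ Finset.range (m + 1),
      ((-1 : ℝ) ^ i * (Real.Gamma (α + m + 1) /
          (Real.Gamma (α + i + 1) * (Nat.factorial (m - i)))) / (Nat.factorial i)) *
        Real.Gamma (α + j + i + 1)
      = (Real.Gamma (α + m + 1) / (Nat.factorial m)) *
          ((-1 : ℝ) ^ i * (m.choose i) * (risingPoly α j).eval (i : ℝ)) := by
    intro i hi
    have him : i ≤ m := Nat.lt_succ_iff.mp (Finset.mem_range.mp hi)
    rw [gamma_rising α hα i j]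
    have hΓi : Real.Gamma (α + i + 1) ≠ 0 := (Real.Gamma_pos_of_pos (hpos i)).ne'
    have hch : (m.choose i : ℝ) * (Nat.factorial i) * (Nat.factorial (m - i))
        = Nat.factorial m := by
      exact_mod_cast congrArg (Nat.cast : ℕ → ℝ)
        (Nat.choose_mul_factorial_mul_factorial him)
    have hf1 : (Nat.factorial i : ℝ) ≠ 0 := by positivity
    have hf2 : (Nat.factorial (m - i) : ℝ) ≠ 0 := by positivity
    have hf3 : (Nat.factorial m : ℝ) ≠ 0 := by positivity
    field_simp
    linear_combination (-(Real.Gamma (α + m + 1) *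
      (risingPoly α j).eval (i:ℝ))) * hch
  rw [Finset.sum_congr rfl key, ← Finset.mul_sum]
  have hdeg : (risingPoly α j).degree < m := by
    rw [Polynomial.degree_eq_natDegree (risingPoly_monic α j).ne_zero, risingPoly_natDegree]
    exact_mod_cast hj
  rw [alt_sum_zero m _ hdeg, mul_zero]


open MeasureTheory Set in
lemma integrable_weight (α : ℝ) (hα : -1 < α) (j : ℕ) :
    IntegrableOn (fun ρ : ℝ => ρ ^ α * Real.exp (-ρ) * ρ ^ j) (Ioi 0) := by
  have hs : (0:ℝ) < α + j + 1 := by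
    have := (Nat.cast_nonneg j : (0:ℝ) ≤ j); linarith
  have h := Real.GammaIntegral_convergent hs
  refine h.congr_fun ?_ measurableSet_Ioi
  intro x hx
  have hx0 : (0:ℝ) < x := hx
  show Real.exp (-x) * x ^ (α + (j:ℝ) + 1 - 1) = x ^ α * Real.exp (-x) * x ^ (j:ℕ)
  rw [show α + (j:ℝ) + 1 - 1 = α + j by ring, Real.rpow_add hx0, Real.rpow_natCast]
  ring

open MeasureTheory Set in
lemma integral_weight (α : ℝ) (hα : -1 < α) (j : ℕ) :
    ∫ ρ in Ioi (0:ℝ), ρ ^ α * Real.exp (-ρ) * ρ ^ j = Real.Gamma (α + j + 1) := by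
  have hs : (0:ℝ) < α + j + 1 := by
    have := (Nat.cast_nonneg j : (0:ℝ) ≤ j); linarith
  rw [Real.Gamma_eq_integral hs]
  refine setIntegral_congr_fun measurableSet_Ioi fun x hx => ?_
  have hx0 : (0:ℝ) < x := hx
  show x ^ α * Real.exp (-x) * x ^ (j:ℕ) = Real.exp (-x) * x ^ (α + (j:ℝ) + 1 - 1)
  rw [show α + (j:ℝ) + 1 - 1 = α + j by ring, Real.rpow_add hx0, Real.rpow_natCast]
  ring

open MeasureTheory Set in
lemma integrable_poly (α : ℝ) (hα : -1 < α) (p : Polynomial ℝ) :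
    IntegrableOn (fun ρ : ℝ => ρ ^ α * Real.exp (-ρ) * p.eval ρ) (Ioi 0) := by
  have heq : (fun ρ : ℝ => ρ ^ α * Real.exp (-ρ) * p.eval ρ)
      = fun ρ : ℝ => ∑ j ∈ Finset.range (p.natDegree + 1),
          p.coeff j * (ρ ^ α * Real.exp (-ρ) * ρ ^ j) := by
    funext ρ
    rw [Polynomial.eval_eq_sum_range, Finset.mul_sum]
    exact Finset.sum_congr rfl fun j _ => by ring
  rw [heq]
  exact integrable_finset_sum _ fun j _ => (integrable_weight α hα j).const_mul _

open MeasureTheory Set in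
lemma integrable_inv_poly (α y : ℝ) (hα : -1 < α) (hy : 0 < y) (p q : Polynomial ℝ) :
    IntegrableOn (fun ρ : ℝ => (1 + y * ρ)⁻¹ * ρ ^ α * Real.exp (-ρ) * p.eval ρ * q.eval ρ)
      (Ioi 0) := by
  have hint := (integrable_poly α hα (p * q)).norm
  refine Integrable.mono' hint ?_ ?_
  · have c1 : ContinuousOn (fun ρ : ℝ => (1 + y * ρ)⁻¹) (Ioi 0) := by
      refine (continuous_const.add (continuous_mul_left y)).continuousOn.inv₀ fun x hx => ?_
      have hx0 : (0:ℝ) < x := hx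
      show (1:ℝ) + y * x ≠ 0
      nlinarith
    have c2 : ContinuousOn (fun ρ : ℝ => ρ ^ α) (Ioi 0) := fun x hx =>
      (Real.continuousAt_rpow_const x α (Or.inl (ne_of_gt hx))).continuousWithinAt
    exact ((((c1.mul c2).mul
      (Real.continuous_exp.comp continuous_neg).continuousOn).mul
      (Polynomial.continuous p).continuousOn).mul
      (Polynomial.continuous q).continuousOn).aestronglyMeasurable measurableSet_Ioi
  · filter_upwards [ae_restrict_mem measurableSet_Ioi] with x hx
    have hx0 : (0:ℝ) < x := hx
    have h1 : (1:ℝ) ≤ 1 + y * x := by nlinarith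
    have habs : |(1 + y * x)⁻¹| ≤ 1 := by
      rw [abs_inv, abs_of_pos (by linarith)]
      exact inv_le_one_of_one_le₀ h1
    have hnorm : ‖(1 + y * x)⁻¹ * x ^ α * Real.exp (-x) * p.eval x * q.eval x‖
        = |(1 + y * x)⁻¹| * ‖x ^ α * Real.exp (-x) * (p * q).eval x‖ := by
      simp only [Real.norm_eq_abs, abs_mul, Polynomial.eval_mul]
      ring
    rw [hnorm]
    calc |(1 + y * x)⁻¹| * ‖x ^ α * Real.exp (-x) * (p * q).eval x‖
        ≤ 1 * ‖x ^ α * Real.exp (-x) * (p * q).eval x‖ :=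
          mul_le_mul_of_nonneg_right habs (norm_nonneg _)
      _ = ‖x ^ α * Real.exp (-x) * (p * q).eval x‖ := one_mul _

open MeasureTheory Set in
lemma orth_integral (α : ℝ) (hα : -1 < α) (m : ℕ) (q : Polynomial ℝ) (hq : q.degree < m) :
    ∫ ρ in Ioi (0:ℝ), ρ ^ α * Real.exp (-ρ) * genLaguerre α m ρ * q.eval ρ = 0 := by
  classical
  set d := q.natDegree with hd
  set c : ℕ → ℝ := fun i => (-1 : ℝ) ^ i * (Real.Gamma (α + m + 1) /
      (Real.Gamma (α + i + 1) * (Nat.factorial (m - i)))) / (Nat.factorial i) with hc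
  have hL : ∀ ρ : ℝ, genLaguerre α m ρ = ∑ i ∈ Finset.range (m + 1), c i * ρ ^ i := by
    intro ρ
    rw [genLaguerre]
    exact Finset.sum_congr rfl fun i _ => by rw [hc]; ring
  have heq : ∀ ρ : ℝ, ρ ^ α * Real.exp (-ρ) * genLaguerre α m ρ * q.eval ρ
      = ∑ p ∈ Finset.range (m + 1) ×ˢ Finset.range (d + 1),
          (c p.1 * q.coeff p.2) * (ρ ^ α * Real.exp (-ρ) * ρ ^ (p.1 + p.2)) := by
    intro ρ
    rw [Finset.sum_product]
    have inner : ∀ i, ∑ j ∈ Finset.range (d + 1),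
        (c i * q.coeff j) * (ρ ^ α * Real.exp (-ρ) * ρ ^ (i + j))
        = ρ ^ α * Real.exp (-ρ) * (c i * ρ ^ i) * q.eval ρ := by
      intro i
      rw [Polynomial.eval_eq_sum_range, Finset.mul_sum]
      exact Finset.sum_congr rfl fun j _ => by rw [pow_add]; ring
    rw [Finset.sum_congr rfl fun i _ => inner i, ← Finset.sum_mul, ← Finset.mul_sum, ← hL ρ]
  simp only [heq]
  rw [integral_finset_sum _ fun p _ => ((integrable_weight α hα (p.1 + p.2)).const_mul _)]
  have hval : ∀ p ∈ Finset.range (m + 1) ×ˢ Finset.range (d + 1),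
      ∫ ρ in Ioi (0:ℝ), (c p.1 * q.coeff p.2) * (ρ ^ α * Real.exp (-ρ) * ρ ^ (p.1 + p.2))
      = (c p.1 * q.coeff p.2) * Real.Gamma (α + p.2 + p.1 + 1) := by
    intro p _
    rw [MeasureTheory.integral_const_mul, integral_weight α hα]
    congr 2
    push_cast
    ring
  rw [Finset.sum_congr rfl hval]
  rw [Finset.sum_product_right]
  have hcoef : ∀ j, q.coeff j ≠ 0 → j < m := by
    intro j hj
    have hqne : q ≠ 0 := fun h => hj (by simp [h])
    have h1 : j ≤ q.natDegree := Polynomial.le_natDegree_of_ne_zero hj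
    have h2 : q.natDegree < m := by
      rw [Polynomial.degree_eq_natDegree hqne] at hq
      exact_mod_cast hq
    omega
  refine Finset.sum_eq_zero fun j _ => ?_
  rcases eq_or_ne (q.coeff j) 0 with h0 | h0
  · simp [h0]
  · have hjm : j < m := hcoef j h0
    have := orth_sum α hα m j hjm
    calc ∑ i ∈ Finset.range (m + 1), (c i * q.coeff j) * Real.Gamma (α + j + i + 1)
        = q.coeff j * ∑ i ∈ Finset.range (m + 1), c i * Real.Gamma (α + j + i + 1) := by
          rw [Finset.mul_sum]; exact Finset.sum_congr rfl fun i _ => by ring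
      _ = 0 := by rw [this, mul_zero]

open MeasureTheory Set in
lemma Imn_factor (α y : ℝ) (hα : -1 < α) (hy : 0 < y) (m k : ℕ) (hkm : k < m) :
    Imn α α y m k = genLaguerre α k (-1 / y) * Imn α α y m 0 := by
  classical
  set cc : ℝ := -1 / y with hcc
  obtain ⟨qq, hqq⟩ := Polynomial.X_sub_C_dvd_sub_C_eval (a := cc) (p := lagPoly α k)
  have hdegq : qq.degree < m := by
    rcases eq_or_ne qq 0 with h0 | h0
    · rw [h0, Polynomial.degree_zero]
      exact_mod_cast WithBot.bot_lt_coe m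
    · have hXC : (Polynomial.X - Polynomial.C cc) ≠ 0 := Polynomial.X_sub_C_ne_zero cc
      have hnd : (lagPoly α k - Polynomial.C ((lagPoly α k).eval cc)).natDegree
          = 1 + qq.natDegree := by
        rw [hqq, Polynomial.natDegree_mul hXC h0, Polynomial.natDegree_X_sub_C]
      have hle : (lagPoly α k - Polynomial.C ((lagPoly α k).eval cc)).natDegree ≤ k := by
        refine le_trans (Polynomial.natDegree_sub_le _ _) ?_
        simp [lagPoly_natDegree_le α k]
      rw [Polynomial.degree_eq_natDegree h0]
      have : qq.natDegree < m := by omega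
      exact_mod_cast this
  have heval : ∀ ρ : ℝ, genLaguerre α k ρ = (ρ - cc) * qq.eval ρ + genLaguerre α k cc := by
    intro ρ
    have h := congrArg (Polynomial.eval ρ) hqq
    simp only [Polynomial.eval_sub, Polynomial.eval_mul, Polynomial.eval_C, Polynomial.eval_X,
      lagPoly_eval] at h
    linarith
  have hsplit : ∀ ρ ∈ Ioi (0:ℝ),
      (1 + y * ρ)⁻¹ * ρ ^ α * Real.exp (-ρ) * genLaguerre α m ρ * genLaguerre α k ρ
      = genLaguerre α k cc *
          ((1 + y * ρ)⁻¹ * ρ ^ α * Real.exp (-ρ) * genLaguerre α m ρ * genLaguerre α 0 ρ)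
        + y⁻¹ * (ρ ^ α * Real.exp (-ρ) * genLaguerre α m ρ * qq.eval ρ) := by
    intro ρ hρ
    have hρ0 : (0:ℝ) < ρ := hρ
    have hden : (1 + y * ρ) ≠ 0 := by nlinarith
    have hy0 : y ≠ 0 := ne_of_gt hy
    have h2 : (1 + y * ρ)⁻¹ * (ρ - cc) = y⁻¹ := by
      have hsub : ρ - cc = (1 + y * ρ) * y⁻¹ := by
        rw [hcc, neg_div, sub_neg_eq_add, one_div, add_mul, one_mul, mul_comm y ρ, mul_assoc,
          mul_inv_cancel₀ hy0, mul_one, add_comm]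
      rw [hsub, ← mul_assoc, inv_mul_cancel₀ hden, one_mul]
    rw [heval ρ, genLaguerre_zero α hα]
    calc (1 + y * ρ)⁻¹ * ρ ^ α * Real.exp (-ρ) * genLaguerre α m ρ *
          ((ρ - cc) * qq.eval ρ + genLaguerre α k cc)
        = ((1 + y * ρ)⁻¹ * (ρ - cc)) * (ρ ^ α * Real.exp (-ρ) * genLaguerre α m ρ * qq.eval ρ)
          + genLaguerre α k cc *
            ((1 + y * ρ)⁻¹ * ρ ^ α * Real.exp (-ρ) * genLaguerre α m ρ * 1) := by ring
      _ = _ := by rw [h2]; ring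
  have hfun1 : (fun ρ : ℝ => (1 + y * ρ)⁻¹ * ρ ^ α * Real.exp (-ρ) *
      (lagPoly α m).eval ρ * (lagPoly α 0).eval ρ)
      = fun ρ : ℝ => (1 + y * ρ)⁻¹ * ρ ^ α * Real.exp (-ρ) *
        genLaguerre α m ρ * genLaguerre α 0 ρ := by
    funext ρ; rw [lagPoly_eval, lagPoly_eval]
  have ib1 : IntegrableOn (fun ρ : ℝ => (1 + y * ρ)⁻¹ * ρ ^ α * Real.exp (-ρ) *
      genLaguerre α m ρ * genLaguerre α 0 ρ) (Ioi 0) :=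
    hfun1 ▸ integrable_inv_poly α y hα hy (lagPoly α m) (lagPoly α 0)
  have hfun2 : (fun ρ : ℝ => ρ ^ α * Real.exp (-ρ) * (lagPoly α m * qq).eval ρ)
      = fun ρ : ℝ => ρ ^ α * Real.exp (-ρ) * genLaguerre α m ρ * qq.eval ρ := by
    funext ρ; rw [Polynomial.eval_mul, lagPoly_eval]; ring
  have ib2 : IntegrableOn (fun ρ : ℝ => ρ ^ α * Real.exp (-ρ) *
      genLaguerre α m ρ * qq.eval ρ) (Ioi 0) :=
    hfun2 ▸ integrable_poly α hα (lagPoly α m * qq)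
  unfold Imn
  rw [setIntegral_congr_fun measurableSet_Ioi hsplit,
    MeasureTheory.integral_add (ib1.const_mul _) (ib2.const_mul _),
    MeasureTheory.integral_const_mul, MeasureTheory.integral_const_mul,
    orth_integral α hα m qq hdegq, mul_zero, add_zero]

open MeasureTheory Set in
lemma Imn_sum (α y : ℝ) (hα : -1 < α) (hy : 0 < y) (m n : ℕ) :
    Imn α (α + 1) y m n = ∑ k ∈ Finset.range (n + 1), Imn α α y m k := by
  unfold Imn
  have hint : ∀ k ∈ Finset.range (n + 1),
      IntegrableOn (fun ρ : ℝ => (1 + y * ρ)⁻¹ * ρ ^ α * Real.exp (-ρ) *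
        genLaguerre α m ρ * genLaguerre α k ρ) (Ioi 0) := by
    intro k _
    have hfun : (fun ρ : ℝ => (1 + y * ρ)⁻¹ * ρ ^ α * Real.exp (-ρ) *
        (lagPoly α m).eval ρ * (lagPoly α k).eval ρ)
        = fun ρ : ℝ => (1 + y * ρ)⁻¹ * ρ ^ α * Real.exp (-ρ) *
          genLaguerre α m ρ * genLaguerre α k ρ := by
      funext ρ; rw [lagPoly_eval, lagPoly_eval]
    exact hfun ▸ integrable_inv_poly α y hα hy (lagPoly α m) (lagPoly α k)
  rw [← MeasureTheory.integral_finset_sum _ hint]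
  refine setIntegral_congr_fun measurableSet_Ioi fun ρ _ => ?_
  rw [← sum_genLaguerre α hα n ρ, Finset.mul_sum]

end ShatAux

theorem Shat_factorize (α y ω : ℝ) (hα : -1 < α) (hy : 0 < y)
    (m n : ℕ) (hmn : n < m) :
    Shat α y ω m n =
      Ibar α α y m 0 *
        (genLaguerre (α + 1) n (-1 / y) - ω * y * genLaguerre α n (-1 / y)) := by
  have h1 : Imn α (α + 1) y m n = genLaguerre (α + 1) n (-1 / y) * Imn α α y m 0 := by
    rw [ShatAux.Imn_sum α y hα hy m n,
      Finset.sum_congr rfl fun k hk => ShatAux.Imn_factor α y hα hy m k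
        (by have := Finset.mem_range.mp hk; omega),
      ← Finset.sum_mul, ShatAux.sum_genLaguerre α hα n (-1 / y)]
  have h2 : Imn α α y m n = genLaguerre α n (-1 / y) * Imn α α y m 0 :=
    ShatAux.Imn_factor α y hα hy m n hmn
  unfold Shat Ibar
  rw [h1, h2]
  ring
end

section
/- For real α > -1, y > 0, ω ∈ ℝ, and a natural number n > 0, with Ŝ_n^m defined as in the context: (α+1) Ŝ_n^1 = (α + 1 + 1/y) Ŝ_n^0 - 1/y. -/
open MeasureTheory Real Set

noncomputable def lagC (β : ℝ) (n j : ℕ) : ℝ :=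
  (-1:ℝ)^j * (Real.Gamma (β + n + 1) / (Real.Gamma (β + j + 1) * (Nat.factorial (n - j)))) / (Nat.factorial j)

lemma intE {s : ℝ} (hs : -1 < s) :
    IntegrableOn (fun ρ : ℝ => ρ ^ s * rexp (-ρ)) (Ioi 0) := by
  have h := Real.GammaIntegral_convergent (s := s + 1) (by linarith)
  simpa [mul_comm] using h

lemma Gval {s : ℝ} (hs : -1 < s) :
    ∫ ρ in Ioi (0:ℝ), ρ ^ s * rexp (-ρ) = Real.Gamma (s + 1) := by
  rw [Real.Gamma_eq_integral (by linarith : (0:ℝ) < s + 1)]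
  simp [mul_comm]

lemma intK {y s : ℝ} (hy : 0 < y) (hs : -1 < s) :
    IntegrableOn (fun ρ : ℝ => (1 + y * ρ)⁻¹ * (ρ ^ s * rexp (-ρ))) (Ioi 0) := by
  apply (intE hs).mono'
  · apply AEStronglyMeasurable.mul _ (intE hs).aestronglyMeasurable
    exact (measurable_const.add (measurable_const.mul measurable_id)).inv.aestronglyMeasurable
  · filter_upwards [ae_restrict_mem measurableSet_Ioi] with ρ hρ
    have hρ' : (0:ℝ) < ρ := hρ
    have h1 : (1:ℝ) ≤ 1 + y * ρ := by nlinarith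
    have h2 : (0:ℝ) < 1 + y * ρ := by linarith
    have h3 : (1 + y * ρ)⁻¹ ≤ 1 := by
      rw [inv_le_one_iff₀]; right; exact h1
    have h4 : (0:ℝ) ≤ ρ ^ s * rexp (-ρ) :=
      mul_nonneg (rpow_nonneg hρ'.le s) (exp_nonneg _)
    rw [norm_mul, norm_of_nonneg h4, norm_of_nonneg (inv_nonneg.mpr h2.le)]
    nlinarith
lemma Frec {y s : ℝ} (hy : 0 < y) (hs : -1 < s) :
    ∫ ρ in Ioi (0:ℝ), (1 + y * ρ)⁻¹ * (ρ ^ (s+1) * rexp (-ρ))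
      = (1/y) * Real.Gamma (s+1) - (1/y) * ∫ ρ in Ioi (0:ℝ), (1 + y * ρ)⁻¹ * (ρ ^ s * rexp (-ρ)) := by
  have key : ∀ ρ ∈ Ioi (0:ℝ),
      (1 + y * ρ)⁻¹ * (ρ ^ (s+1) * rexp (-ρ))
        = (1/y) * (ρ ^ s * rexp (-ρ)) - (1/y) * ((1 + y * ρ)⁻¹ * (ρ ^ s * rexp (-ρ))) := by
    intro ρ hρ
    have hρ' : (0:ℝ) < ρ := hρ
    have h2 : (0:ℝ) < 1 + y * ρ := by nlinarith
    have hpow : ρ ^ (s+1) = ρ ^ s * ρ := by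
      rw [rpow_add hρ', rpow_one]
    rw [hpow]
    field_simp
    ring
  rw [setIntegral_congr_fun measurableSet_Ioi key,
    integral_sub ((intE hs).const_mul _) ((intK hy hs).const_mul _),
    integral_const_mul, integral_const_mul, Gval hs]

lemma sum_identity (n : ℕ) : ∀ x : ℝ, (∀ k ∈ Finset.range (n+1), x + k ≠ 0) →
    ∑ j ∈ Finset.range (n+1), (-1:ℝ)^j * (n.choose j) / (x + j)
      = (n.factorial : ℝ) / ∏ k ∈ Finset.range (n+1), (x + k) := by
  induction n with
  | zero => intro x hx; simp
  | succ n ih =>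
    intro x hx
    have hx0 : x ≠ 0 := by simpa using hx 0 (by simp)
    have hxs : ∀ k ∈ Finset.range (n+1), x + k ≠ 0 := by
      intro k hk
      exact hx k (Finset.mem_range.mpr (by have := Finset.mem_range.mp hk; omega))
    have hxs1 : ∀ k ∈ Finset.range (n+1), (x+1) + k ≠ 0 := by
      intro k hk
      have h := hx (k+1) (Finset.mem_range.mpr (by have := Finset.mem_range.mp hk; omega))
      intro hc; apply h; push_cast; linarith
    have e1 : ∑ j ∈ Finset.range (n+2), (-1:ℝ)^j * ((n+1).choose j) / (x + j)
        = (∑ j ∈ Finset.range (n+2), (-1:ℝ)^j * (n.choose j) / (x + j))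
          + (∑ j ∈ Finset.range (n+2), (-1:ℝ)^j * (if j = 0 then (0:ℝ) else n.choose (j-1)) / (x + j)) := by
      rw [← Finset.sum_add_distrib]
      apply Finset.sum_congr rfl
      intro j _
      cases j with
      | zero => simp
      | succ i =>
        simp only [Nat.choose_succ_succ, Nat.succ_ne_zero, if_false, Nat.succ_sub_one]
        push_cast
        ring
    have e2 : ∑ j ∈ Finset.range (n+2), (-1:ℝ)^j * (n.choose j) / (x + j)
        = ∑ j ∈ Finset.range (n+1), (-1:ℝ)^j * (n.choose j) / (x + j) := by
      rw [Finset.sum_range_succ, Nat.choose_succ_self]; simp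
    have e3 : ∑ j ∈ Finset.range (n+2), (-1:ℝ)^j * (if j = 0 then (0:ℝ) else n.choose (j-1)) / (x + j)
        = - ∑ j ∈ Finset.range (n+1), (-1:ℝ)^j * (n.choose j) / ((x+1) + j) := by
      rw [Finset.sum_range_succ']
      have h0 : ((-1:ℝ)^(0:ℕ) * (if (0:ℕ) = 0 then (0:ℝ) else ((n.choose (0-1) : ℕ) : ℝ))) / (x + ((0:ℕ):ℝ)) = 0 := by simp
      rw [h0, add_zero, ← Finset.sum_neg_distrib]
      apply Finset.sum_congr rfl
      intro j _
      rw [if_neg (Nat.succ_ne_zero j)]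
      simp only [Nat.add_sub_cancel]
      push_cast
      ring
    rw [e1, e2, e3, ih x hxs, ih (x+1) hxs1]
    have p1 : ∏ k ∈ Finset.range (n+2), (x + (k:ℝ)) = (∏ k ∈ Finset.range (n+1), (x + (k:ℝ))) * (x + ((n:ℝ)+1)) := by
      rw [Finset.prod_range_succ]; push_cast; ring
    have p2 : ∏ k ∈ Finset.range (n+2), (x + (k:ℝ)) = x * ∏ k ∈ Finset.range (n+1), ((x+1) + (k:ℝ)) := by
      rw [Finset.prod_range_succ']
      have h : (∏ k ∈ Finset.range (n+1), (x + ((k:ℝ)+1))) = ∏ k ∈ Finset.range (n+1), ((x+1) + (k:ℝ)) :=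
        Finset.prod_congr rfl (fun k _ => by ring)
      push_cast
      rw [h]; ring
    have hprod : (∏ k ∈ Finset.range (n+1), (x + (k:ℝ))) ≠ 0 := Finset.prod_ne_zero_iff.mpr hxs
    have hprod1 : (∏ k ∈ Finset.range (n+1), ((x+1) + (k:ℝ))) ≠ 0 := Finset.prod_ne_zero_iff.mpr hxs1
    have hxn : x + ((n:ℝ)+1) ≠ 0 := by
      have := hx (n+1) (Finset.mem_range.mpr (by omega)); push_cast at this ⊢; exact this
    have hne2 : (∏ k ∈ Finset.range (n+2), (x + (k:ℝ))) ≠ 0 := by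
      rw [p2]; exact mul_ne_zero hx0 hprod1
    have d1 : (n.factorial:ℝ) / (∏ k ∈ Finset.range (n+1), (x + (k:ℝ)))
        = ((n.factorial:ℝ) * (x + ((n:ℝ)+1))) / ∏ k ∈ Finset.range (n+2), (x + (k:ℝ)) := by
      rw [p1, div_eq_div_iff hprod (mul_ne_zero hprod hxn)]; ring
    have d2 : (n.factorial:ℝ) / (∏ k ∈ Finset.range (n+1), ((x+1) + (k:ℝ)))
        = ((n.factorial:ℝ) * x) / ∏ k ∈ Finset.range (n+2), (x + (k:ℝ)) := by
      rw [p2, div_eq_div_iff hprod1 (mul_ne_zero hx0 hprod1)]; ring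
    rw [d1, d2, ← sub_eq_add_neg, div_sub_div_same, Nat.factorial_succ]
    congr 1
    push_cast
    ring
lemma Gamma_prod {x : ℝ} (hx : 0 < x) (n : ℕ) :
    Real.Gamma (x + n) = Real.Gamma x * ∏ k ∈ Finset.range n, (x + k) := by
  induction n with
  | zero => simp
  | succ n ih =>
    have h1 : x + ((n:ℝ)+1) = (x + n) + 1 := by ring
    have h2 : x + (n:ℝ) ≠ 0 := by positivity
    push_cast
    rw [h1, Real.Gamma_add_one h2, ih, Finset.prod_range_succ]
    ring

lemma Talpha {α : ℝ} (hα : -1 < α) {n : ℕ} (hn : 0 < n) :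
    ∑ j ∈ Finset.range (n+1), lagC α n j * Real.Gamma (α + j + 1) = 0 := by
  have hchoose : ∑ j ∈ Finset.range (n+1), (-1:ℝ)^j * (n.choose j) = 0 := by
    have h := Int.alternating_sum_range_choose (n := n)
    rw [if_neg hn.ne'] at h
    have : ((∑ m ∈ Finset.range (n+1), (-1:ℤ)^m * (n.choose m) : ℤ) : ℝ)
        = ∑ j ∈ Finset.range (n+1), (-1:ℝ)^j * (n.choose j) := by push_cast; rfl
    rw [← this, h]; simp
  have key : ∀ j ∈ Finset.range (n+1), lagC α n j * Real.Gamma (α + j + 1)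
      = (Real.Gamma (α + n + 1) / n.factorial) * ((-1:ℝ)^j * (n.choose j)) := by
    intro j hj
    have hjn : j ≤ n := Nat.lt_succ_iff.mp (Finset.mem_range.mp hj)
    have hjj : (0:ℝ) ≤ j := Nat.cast_nonneg j
    have hG : Real.Gamma (α + j + 1) ≠ 0 := (Real.Gamma_pos_of_pos (by linarith)).ne'
    have hc : ((n.choose j : ℝ)) * (Nat.factorial j) * (Nat.factorial (n-j)) = (Nat.factorial n : ℝ) := by
      rw [← Nat.cast_mul, ← Nat.cast_mul, Nat.choose_mul_factorial_mul_factorial hjn]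
    have hj1 : (Nat.factorial j : ℝ) ≠ 0 := Nat.cast_ne_zero.mpr (Nat.factorial_ne_zero j)
    have hj2 : (Nat.factorial (n-j) : ℝ) ≠ 0 := Nat.cast_ne_zero.mpr (Nat.factorial_ne_zero _)
    have hj3 : (Nat.factorial n : ℝ) ≠ 0 := Nat.cast_ne_zero.mpr (Nat.factorial_ne_zero n)
    have hcc : (n.choose j : ℝ) = (Nat.factorial n : ℝ) / ((Nat.factorial j) * (Nat.factorial (n-j))) := by
      rw [eq_div_iff (mul_ne_zero hj1 hj2), ← mul_assoc]; exact hc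
    rw [lagC, hcc]
    field_simp
  rw [Finset.sum_congr rfl key, ← Finset.mul_sum, hchoose, mul_zero]

lemma Talpha1 {α : ℝ} (hα : -1 < α) (n : ℕ) :
    ∑ j ∈ Finset.range (n+1), lagC (α+1) n j * Real.Gamma (α + j + 1) = Real.Gamma (α + 1) := by
  have hx : (0:ℝ) < α + 1 := by linarith
  have hxs : ∀ k ∈ Finset.range (n+1), (α+1) + (k:ℝ) ≠ 0 := by
    intro k _
    have : (0:ℝ) ≤ k := Nat.cast_nonneg k
    intro hc; linarith
  have key : ∀ j ∈ Finset.range (n+1), lagC (α+1) n j * Real.Gamma (α + j + 1)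
      = (Real.Gamma (α + 1 + (n+1)) / n.factorial) * ((-1:ℝ)^j * (n.choose j) / ((α+1) + j)) := by
    intro j hj
    have hjn : j ≤ n := Nat.lt_succ_iff.mp (Finset.mem_range.mp hj)
    have hjj : (0:ℝ) ≤ j := Nat.cast_nonneg j
    have hGpos : 0 < Real.Gamma (α + j + 1) := Real.Gamma_pos_of_pos (by linarith)
    have hstep : Real.Gamma (α + 1 + j + 1) = (α + j + 1) * Real.Gamma (α + j + 1) := by
      have : α + 1 + (j:ℝ) + 1 = (α + (j:ℝ) + 1) + 1 := by ring
      rw [this, Real.Gamma_add_one (by intro hc; linarith)]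
    have hc : ((n.choose j : ℝ)) * (Nat.factorial j) * (Nat.factorial (n-j)) = (Nat.factorial n : ℝ) := by
      rw [← Nat.cast_mul, ← Nat.cast_mul, Nat.choose_mul_factorial_mul_factorial hjn]
    have hj1 : (Nat.factorial j : ℝ) ≠ 0 := Nat.cast_ne_zero.mpr (Nat.factorial_ne_zero j)
    have hj2 : (Nat.factorial (n-j) : ℝ) ≠ 0 := Nat.cast_ne_zero.mpr (Nat.factorial_ne_zero _)
    have hj3 : (Nat.factorial n : ℝ) ≠ 0 := Nat.cast_ne_zero.mpr (Nat.factorial_ne_zero n)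
    have hne : α + (j:ℝ) + 1 ≠ 0 := by intro hc; linarith
    have harg : α + 1 + (n:ℝ) + 1 = α + 1 + ((n:ℝ)+1) := by ring
    have hcc : (n.choose j : ℝ) = (Nat.factorial n : ℝ) / ((Nat.factorial j) * (Nat.factorial (n-j))) := by
      rw [eq_div_iff (mul_ne_zero hj1 hj2), ← mul_assoc]; exact hc
    rw [lagC, hstep, harg, hcc]
    field_simp
    ring
  rw [Finset.sum_congr rfl key, ← Finset.mul_sum,
    show ∑ j ∈ Finset.range (n+1), (-1:ℝ)^j * (n.choose j) / ((α+1) + j)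
      = (n.factorial : ℝ) / ∏ k ∈ Finset.range (n+1), ((α+1) + k) from sum_identity n (α+1) hxs]
  rw [show α + 1 + ((n:ℝ)+1) = (α+1) + ((n+1 : ℕ):ℝ) by push_cast; ring,
    Gamma_prod hx (n+1)]
  have hprod : (∏ k ∈ Finset.range (n+1), ((α+1) + (k:ℝ))) ≠ 0 := Finset.prod_ne_zero_iff.mpr hxs
  have hj3 : (Nat.factorial n : ℝ) ≠ 0 := Nat.cast_ne_zero.mpr (Nat.factorial_ne_zero n)
  field_simp
lemma lag_eq (β : ℝ) (n : ℕ) (x : ℝ) :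
    genLaguerre β n x = ∑ j ∈ Finset.range (n+1), lagC β n j * x ^ j := by
  unfold genLaguerre lagC
  apply Finset.sum_congr rfl
  intro j _
  ring

lemma lag_zero {α : ℝ} (hα : -1 < α) (x : ℝ) : genLaguerre α 0 x = 1 := by
  have h : Real.Gamma (α + 1) ≠ 0 := (Real.Gamma_pos_of_pos (by linarith)).ne'
  unfold genLaguerre
  simp [div_self h]

lemma lag_one {α : ℝ} (hα : -1 < α) (x : ℝ) : genLaguerre α 1 x = (α + 1) - x := by
  have h1 : (0:ℝ) < α + 1 := by linarith
  have hG1 : Real.Gamma (α + 1) ≠ 0 := (Real.Gamma_pos_of_pos h1).ne'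
  have hG2 : Real.Gamma (α + 1 + 1) = (α+1) * Real.Gamma (α + 1) := Real.Gamma_add_one h1.ne'
  unfold genLaguerre
  rw [Finset.sum_range_succ, Finset.sum_range_one]
  push_cast
  rw [hG2]
  have hG2' : (α+1) * Real.Gamma (α + 1) ≠ 0 := mul_ne_zero h1.ne' hG1
  field_simp
  ring
  rw [add_comm 1 α, mul_assoc, mul_inv_cancel₀ hG1]; ring

lemma lag_pointwise {s β : ℝ} (n : ℕ) {ρ : ℝ} (hρ : 0 < ρ) (w : ℝ) :
    w * (ρ ^ s * rexp (-ρ)) * genLaguerre β n ρ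
      = ∑ j ∈ Finset.range (n+1), lagC β n j * (w * (ρ ^ (s + j) * rexp (-ρ))) := by
  rw [lag_eq, Finset.mul_sum]
  apply Finset.sum_congr rfl
  intro j _
  rw [rpow_add hρ, rpow_natCast]
  ring

lemma intKL {y s β : ℝ} (hy : 0 < y) (hs : -1 < s) (n : ℕ) :
    IntegrableOn (fun ρ : ℝ => (1 + y * ρ)⁻¹ * (ρ ^ s * rexp (-ρ)) * genLaguerre β n ρ) (Ioi 0) := by
  apply IntegrableOn.congr_fun
    (f := fun ρ : ℝ => ∑ j ∈ Finset.range (n+1), lagC β n j * ((1 + y * ρ)⁻¹ * (ρ ^ (s + j) * rexp (-ρ))))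
  · apply integrable_finset_sum
    intro j _
    exact ((intK hy (by have : (0:ℝ) ≤ j := Nat.cast_nonneg j; linarith)).const_mul _)
  · intro ρ hρ
    exact (lag_pointwise n hρ _).symm
  · exact measurableSet_Ioi

lemma expandI {y s β : ℝ} (hy : 0 < y) (hs : -1 < s) (n : ℕ) :
    ∫ ρ in Ioi (0:ℝ), (1 + y * ρ)⁻¹ * (ρ ^ s * rexp (-ρ)) * genLaguerre β n ρ
      = ∑ j ∈ Finset.range (n+1), lagC β n j *
          ∫ ρ in Ioi (0:ℝ), (1 + y * ρ)⁻¹ * (ρ ^ (s + j) * rexp (-ρ)) := by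
  rw [setIntegral_congr_fun measurableSet_Ioi
    (g := fun ρ : ℝ => ∑ j ∈ Finset.range (n+1), lagC β n j * ((1 + y * ρ)⁻¹ * (ρ ^ (s + j) * rexp (-ρ))))
    (fun ρ hρ => lag_pointwise n hρ _)]
  rw [integral_finset_sum _ (fun j _ =>
    ((intK hy (by have : (0:ℝ) ≤ j := Nat.cast_nonneg j; linarith)).const_mul _))]
  exact Finset.sum_congr rfl (fun j _ => by rw [integral_const_mul])

-- key values
lemma Imn_zero {α β y : ℝ} (hα : -1 < α) (hy : 0 < y) (n : ℕ) :
    Imn α β y 0 n = ∑ j ∈ Finset.range (n+1), lagC β n j *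
        ∫ ρ in Ioi (0:ℝ), (1 + y * ρ)⁻¹ * (ρ ^ (α + j) * rexp (-ρ)) := by
  rw [Imn, setIntegral_congr_fun measurableSet_Ioi
    (g := fun ρ : ℝ => (1 + y * ρ)⁻¹ * (ρ ^ α * rexp (-ρ)) * genLaguerre β n ρ)
    (fun ρ _ => by rw [lag_zero hα]; ring)]
  exact expandI hy hα n

lemma Imn_one {α β y : ℝ} (hα : -1 < α) (hy : 0 < y) (n : ℕ)
    (T : ℝ) (hT : ∑ j ∈ Finset.range (n+1), lagC β n j * Real.Gamma (α + j + 1) = T) :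
    Imn α β y 1 n = (α + 1 + 1/y) * Imn α β y 0 n - (1/y) * T := by
  have hint1 := intKL (β := β) hy hα n
  have hα1 : -1 < α + 1 := by linarith
  have hint2 := intKL (β := β) hy hα1 n
  have step1 : Imn α β y 1 n
      = (α+1) * (∫ ρ in Ioi (0:ℝ), (1 + y * ρ)⁻¹ * (ρ ^ α * rexp (-ρ)) * genLaguerre β n ρ)
        - ∫ ρ in Ioi (0:ℝ), (1 + y * ρ)⁻¹ * (ρ ^ (α+1) * rexp (-ρ)) * genLaguerre β n ρ := by
    rw [Imn, setIntegral_congr_fun measurableSet_Ioi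
      (g := fun ρ : ℝ => (α+1) * ((1 + y * ρ)⁻¹ * (ρ ^ α * rexp (-ρ)) * genLaguerre β n ρ)
        - (1 + y * ρ)⁻¹ * (ρ ^ (α+1) * rexp (-ρ)) * genLaguerre β n ρ)]
    · rw [integral_sub (hint1.const_mul _) hint2, integral_const_mul]
    · intro ρ hρ
      have hρ' : (0:ℝ) < ρ := hρ
      dsimp only
      rw [lag_one hα, rpow_add hρ', rpow_one]
      ring
  have step2 : ∫ ρ in Ioi (0:ℝ), (1 + y * ρ)⁻¹ * (ρ ^ (α+1) * rexp (-ρ)) * genLaguerre β n ρ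
      = (1/y) * T - (1/y) * ∫ ρ in Ioi (0:ℝ), (1 + y * ρ)⁻¹ * (ρ ^ α * rexp (-ρ)) * genLaguerre β n ρ := by
    rw [expandI hy hα1 n, expandI hy hα n]
    have : ∀ j ∈ Finset.range (n+1), lagC β n j *
        (∫ ρ in Ioi (0:ℝ), (1 + y * ρ)⁻¹ * (ρ ^ (α + 1 + j) * rexp (-ρ)))
        = (1/y) * (lagC β n j * Real.Gamma (α + j + 1))
          - (1/y) * (lagC β n j * ∫ ρ in Ioi (0:ℝ), (1 + y * ρ)⁻¹ * (ρ ^ (α + j) * rexp (-ρ))) := by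
      intro j _
      have he : α + 1 + (j:ℝ) = (α + j) + 1 := by ring
      rw [he, Frec hy (by have : (0:ℝ) ≤ j := Nat.cast_nonneg j; linarith)]
      have he2 : α + (j:ℝ) + 1 = (α + j) + 1 := by ring
      rw [he2]
      ring
    rw [Finset.sum_congr rfl this, Finset.sum_sub_distrib, ← Finset.mul_sum, ← Finset.mul_sum, hT]
  have e0 : Imn α β y 0 n = ∫ ρ in Ioi (0:ℝ), (1 + y * ρ)⁻¹ * (ρ ^ α * rexp (-ρ)) * genLaguerre β n ρ := by
    rw [Imn, setIntegral_congr_fun measurableSet_Ioi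
      (g := fun ρ : ℝ => (1 + y * ρ)⁻¹ * (ρ ^ α * rexp (-ρ)) * genLaguerre β n ρ)
      (fun ρ _ => by rw [lag_zero hα]; ring)]
  rw [step1, step2, ← e0]
  ring


theorem Shat_recurrence_m_zero (α y ω : ℝ) (hα : -1 < α) (hy : 0 < y)
    (n : ℕ) (hn : 0 < n) :
    (α + 1) * Shat α y ω 1 n = (α + 1 + 1 / y) * Shat α y ω 0 n - 1 / y := by
  have h1 : (0:ℝ) < α + 1 := by linarith
  have hG : Real.Gamma (α + 1) ≠ 0 := (Real.Gamma_pos_of_pos h1).ne'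
  have I1b := Imn_one (β := α + 1) hα hy n (Real.Gamma (α+1)) (Talpha1 hα n)
  have I1a := Imn_one (β := α) hα hy n 0 (Talpha hα hn)
  have hGm1 : Real.Gamma ((1:ℕ) + α + 1) = (α+1) * Real.Gamma (α + 1) := by
    push_cast
    rw [show (1:ℝ) + α + 1 = (α+1) + 1 by ring, Real.Gamma_add_one h1.ne']
  have hGm0 : Real.Gamma ((0:ℕ) + α + 1) = Real.Gamma (α + 1) := by norm_num
  unfold Shat Ibar
  rw [hGm1, hGm0, I1b, I1a]
  have hy' : y ≠ 0 := hy.ne'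
  field_simp
  ring
end
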